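/- Let l, h > 0 and ψg ∈ ℂ. Suppose ψ : [0,∞) → ℂ is continuous, twice differentiable on (0,h) and on (h,∞), satisfies ψ''(z) = 2i(ψ(z) - ψg) for 0 < z < h and l² ψ''(z) = 2i(ψ(z) - ψg) for z > h, has one-sided derivatives at h with ψ'_-(h) = l² ψ'_+(h), and satisfies ψ(0) = 0 and ψ(z) → ψg as z → ∞. Then ψ(z) = A e^{(1+i)z} + B e^{-(1+i)z} + ψg for 0 ≤ z ≤ h and ψ(z) = D e^{-(1+i)z/l} + ψg for z ≥ h, where, with d = 1 + e^{(2+2i)h} - l + e^{(2+2i)h} l, A = ψg (l-1)/d, B = -ψg e^{(2+2i)h}(l+1)/d, D = -2 ψg e^{(1+i)h + (1+i)h/l}/d. -/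

import Mathlib

open Complex Filter Set

lemma const_of_hasDerivAt_zero {s : Set ℝ} (hso : IsOpen s) (hsc : Convex ℝ s)
    {g : ℝ → ℂ} (hg : ∀ z ∈ s, HasDerivAt g 0 z) {x y : ℝ} (hx : x ∈ s) (hy : y ∈ s) :
    g x = g y := by
  apply hsc.is_const_of_fderivWithin_eq_zero (𝕜 := ℝ)
    (fun z hz => ((hg z hz).differentiableAt.differentiableWithinAt)) _ hx hy
  intro z hz
  rw [((hg z hz).hasFDerivAt.hasFDerivWithinAt.fderivWithin (hso.uniqueDiffWithinAt hz))]
  ext t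
  simp

lemma cexp_real_hasDerivAt (μ : ℂ) (z : ℝ) :
    HasDerivAt (fun t : ℝ => Complex.exp (μ * t)) (μ * Complex.exp (μ * z)) z := by
  have h1 : HasDerivAt (fun t : ℝ => μ * (t : ℂ)) μ z := by
    simpa using (Complex.ofRealCLM.hasDerivAt (x := z)).const_mul μ
  simpa [mul_comm] using h1.cexp

lemma second_order_solution {s : Set ℝ} (hso : IsOpen s) (hsc : Convex ℝ s)
    (μ c : ℂ) (hμ : μ ≠ 0) (f f' f'' : ℝ → ℂ)
    (hd1 : ∀ z ∈ s, HasDerivAt f (f' z) z)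
    (hd2 : ∀ z ∈ s, HasDerivAt f' (f'' z) z)
    (hode : ∀ z ∈ s, f'' z = μ ^ 2 * (f z - c)) :
    ∃ a b : ℂ, ∀ z ∈ s, f z = a * Complex.exp (μ * z) + b * Complex.exp (-μ * z) + c := by
  rcases s.eq_empty_or_nonempty with rfl | ⟨x0, hx0⟩
  · exact ⟨0, 0, fun z hz => absurd hz (notMem_empty _)⟩
  have hg1 : ∀ z ∈ s, HasDerivAt (fun t : ℝ => Complex.exp (μ * t) * (f' t - μ * (f t - c))) 0 z := by
    intro z hz
    have := ((cexp_real_hasDerivAt μ z).mul (((hd2 z hz).sub (((hd1 z hz).sub_const c).const_mul μ))))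
    refine this.congr_deriv ?_
    simp only [Pi.sub_apply]
    rw [hode z hz]; ring
  obtain ⟨k, hg1c⟩ : ∃ k, ∀ z ∈ s, Complex.exp (μ * z) * (f' z - μ * (f z - c)) = k :=
    ⟨_, fun z hz => const_of_hasDerivAt_zero hso hsc hg1 hz hx0⟩
  have hE : ∀ z : ℝ, Complex.exp (-μ * z) = (Complex.exp (μ * z))⁻¹ := by
    intro z
    rw [← Complex.exp_neg]
    congr 1; ring
  have hE2 : ∀ z : ℝ, Complex.exp (-(2*μ) * z) = ((Complex.exp (μ * z))⁻¹)^2 := by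
    intro z
    have harg : -(2*μ) * (z:ℂ) = -(μ*z) + -(μ*z) := by ring
    rw [harg, Complex.exp_add, Complex.exp_neg]
    ring
  have hf' : ∀ z ∈ s, f' z = μ * (f z - c) + k * (Complex.exp (μ * z))⁻¹ := by
    intro z hz
    have h1 := hg1c z hz
    have hne := Complex.exp_ne_zero (μ * (z:ℂ))
    field_simp
    linear_combination h1
  have hg2 : ∀ z ∈ s, HasDerivAt
      (fun t : ℝ => Complex.exp (-μ * t) * (f t - c) + k / (2*μ) * Complex.exp (-(2*μ) * t)) 0 z := by
    intro z hz
    have hA := (cexp_real_hasDerivAt (-μ) z).mul ((hd1 z hz).sub_const c)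
    have hB := (cexp_real_hasDerivAt (-(2*μ)) z).const_mul (k / (2*μ))
    have hsum := hA.add hB
    refine hsum.congr_deriv ?_
    rw [hE z, hE2 z, hf' z hz]
    have hne := Complex.exp_ne_zero (μ * (z:ℂ))
    field_simp
    ring
  obtain ⟨a, hg2c⟩ : ∃ a, ∀ z ∈ s,
      Complex.exp (-μ * z) * (f z - c) + k / (2*μ) * Complex.exp (-(2*μ) * z) = a :=
    ⟨_, fun z hz => const_of_hasDerivAt_zero hso hsc hg2 hz hx0⟩
  refine ⟨a, -k / (2*μ), fun z hz => ?_⟩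
  have h2 := hg2c z hz
  rw [hE z, hE2 z] at h2
  rw [hE z]
  have hne := Complex.exp_ne_zero (μ * (z:ℂ))
  have hI := mul_inv_cancel₀ hne
  linear_combination (Complex.exp (μ*(z:ℂ))) * h2 + (-(f z - c) - k/(2*μ) * (Complex.exp (μ*(z:ℂ)))⁻¹) * hI

lemma eq_on_closure_pt {ψ F : ℝ → ℂ} {s : Set ℝ} {x : ℝ}
    (hψ : ContinuousWithinAt ψ (Set.Ici 0) x) (hsub : s ⊆ Set.Ici (0:ℝ))
    (hx : x ∈ closure s) (heq : ∀ z ∈ s, ψ z = F z) (hF : ContinuousAt F x) :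
    ψ x = F x := by
  have hne : (nhdsWithin x s).NeBot := mem_closure_iff_nhdsWithin_neBot.mp hx
  have t1 : Tendsto ψ (nhdsWithin x s) (nhds (ψ x)) :=
    hψ.mono_left (nhdsWithin_mono x hsub)
  have t2 : Tendsto F (nhdsWithin x s) (nhds (F x)) :=
    hF.continuousWithinAt.tendsto
  have heq' : ψ =ᶠ[nhdsWithin x s] F :=
    Filter.eventuallyEq_of_mem self_mem_nhdsWithin heq
  exact tendsto_nhds_unique (t1.congr' heq') t2

theorem one_jump_solution_uniqueness (l h : ℝ) (hl : 0 < l) (hh : 0 < h) (ψg : ℂ)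
    (ψ ψ' ψ'' : ℝ → ℂ) (dm dp : ℂ)
    (hcont : ContinuousOn ψ (Set.Ici (0 : ℝ)))
    (hd1low : ∀ z ∈ Set.Ioo (0 : ℝ) h, HasDerivAt ψ (ψ' z) z)
    (hd2low : ∀ z ∈ Set.Ioo (0 : ℝ) h, HasDerivAt ψ' (ψ'' z) z)
    (hd1high : ∀ z ∈ Set.Ioi h, HasDerivAt ψ (ψ' z) z)
    (hd2high : ∀ z ∈ Set.Ioi h, HasDerivAt ψ' (ψ'' z) z)
    (hodelow : ∀ z ∈ Set.Ioo (0 : ℝ) h, ψ'' z = 2 * Complex.I * (ψ z - ψg))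
    (hodehigh : ∀ z ∈ Set.Ioi h, (l : ℂ) ^ 2 * ψ'' z = 2 * Complex.I * (ψ z - ψg))
    (hdm : HasDerivWithinAt ψ dm (Set.Icc 0 h) h)
    (hdp : HasDerivWithinAt ψ dp (Set.Ici h) h)
    (hflux : dm = (l : ℂ) ^ 2 * dp)
    (h0 : ψ 0 = 0)
    (hlim : Filter.Tendsto ψ Filter.atTop (nhds ψg)) :
    (∀ z ∈ Set.Icc (0 : ℝ) h,
      ψ z = ψg * ((l : ℂ) - 1)
              / (1 + Complex.exp ((2 + 2 * Complex.I) * h) - l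
                  + Complex.exp ((2 + 2 * Complex.I) * h) * l)
            * Complex.exp ((1 + Complex.I) * z)
          + (-(ψg * Complex.exp ((2 + 2 * Complex.I) * h) * ((l : ℂ) + 1))
              / (1 + Complex.exp ((2 + 2 * Complex.I) * h) - l
                  + Complex.exp ((2 + 2 * Complex.I) * h) * l))
            * Complex.exp (-(1 + Complex.I) * z)
          + ψg) ∧
    (∀ z ∈ Set.Ici h,
      ψ z = (-(2 * ψg * Complex.exp ((1 + Complex.I) * h + (1 + Complex.I) * h / l))
              / (1 + Complex.exp ((2 + 2 * Complex.I) * h) - l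
                  + Complex.exp ((2 + 2 * Complex.I) * h) * l))
            * Complex.exp (-(1 + Complex.I) * z / l)
          + ψg) := by
  have hl0 : (l:ℂ) ≠ 0 := by exact_mod_cast hl.ne'
  have hμ : ((1:ℂ) + Complex.I) ≠ 0 := by simp [Complex.ext_iff]
  have hμ2 : ((1:ℂ) + Complex.I)^2 = 2*Complex.I := by linear_combination Complex.I_sq
  set ν : ℂ := ((1:ℂ) + Complex.I) / l with hνdef
  have hν : ν ≠ 0 := div_ne_zero hμ hl0
  -- low layer representation on the open interval
  obtain ⟨a, b, Hlow0⟩ := second_order_solution isOpen_Ioo (convex_Ioo (0:ℝ) h)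
    (1 + Complex.I) ψg hμ ψ ψ' ψ'' hd1low hd2low
    (fun z hz => by rw [hμ2]; exact hodelow z hz)
  -- high layer representation on the open interval
  obtain ⟨cc, d, Hhigh0⟩ := second_order_solution isOpen_Ioi (convex_Ioi h)
    ν ψg hν ψ ψ' ψ'' hd1high hd2high
    (fun z hz => by
      have hode := hodehigh z hz
      have hν2 : ν^2 = 2*Complex.I / (l:ℂ)^2 := by
        rw [hνdef]
        field_simp
        linear_combination Complex.I_sq
      rw [hν2]
      field_simp
      linear_combination hode)
  -- the growing mode in the top layer vanishes
  have hcc : cc = 0 := by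
    by_contra hne
    have hre : ∀ z : ℝ, (ν * (z:ℂ)).re = z / l := by
      intro z
      have : ν * (z:ℂ) = (((z/l : ℝ)):ℂ) * (1 + Complex.I) := by
        rw [hνdef]; push_cast; field_simp
      rw [this]
      simp
    have hnorm1 : ∀ z : ℝ, ‖Complex.exp (ν * z)‖ = Real.exp (z/l) := by
      intro z; rw [Complex.norm_exp, hre]
    have hnorm2 : ∀ z : ℝ, ‖Complex.exp (-ν * z)‖ = Real.exp (-(z/l)) := by
      intro z
      rw [Complex.norm_exp, show -ν * (z:ℂ) = -(ν * z) by ring, Complex.neg_re, hre]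
    have h1 : Tendsto (fun z : ℝ => ψ z - ψg) atTop (nhds 0) := by
      simpa using hlim.sub_const ψg
    have h2 : Tendsto (fun z : ℝ => ‖cc * Complex.exp (ν * z) + d * Complex.exp (-ν * z)‖)
        atTop (nhds 0) := by
      have heq : (fun z : ℝ => ψ z - ψg) =ᶠ[atTop]
          (fun z : ℝ => cc * Complex.exp (ν * z) + d * Complex.exp (-ν * z)) := by
        filter_upwards [eventually_gt_atTop h] with z hz
        rw [Hhigh0 z hz]; ring
      simpa using (h1.congr' heq).norm
    have key : ∀ z : ℝ, ‖cc‖ * Real.exp (z/l) - ‖d‖ * Real.exp (-(z/l)) ≤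
        ‖cc * Complex.exp (ν * z) + d * Complex.exp (-ν * z)‖ := by
      intro z
      have t1 : ‖cc * Complex.exp (ν * z)‖ = ‖cc‖ * Real.exp (z/l) := by
        rw [norm_mul]; congr 1; exact hnorm1 z
      have t2 : ‖d * Complex.exp (-ν * z)‖ = ‖d‖ * Real.exp (-(z/l)) := by
        rw [norm_mul]; congr 1; exact hnorm2 z
      have := norm_sub_norm_le (cc * Complex.exp (ν * z)) (-(d * Complex.exp (-ν * z)))
      rw [sub_neg_eq_add, norm_neg, t1, t2] at this
      exact this
    have h3 : Tendsto (fun z : ℝ => ‖cc‖ * Real.exp (z/l) - ‖d‖ * Real.exp (-(z/l)))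
        atTop atTop := by
      have hb : Tendsto (fun z : ℝ => ‖cc‖ * Real.exp (z/l)) atTop atTop := by
        apply Tendsto.const_mul_atTop (norm_pos_iff.mpr hne)
        exact Real.tendsto_exp_atTop.comp (tendsto_id.atTop_div_const hl)
      have hs : Tendsto (fun z : ℝ => -(‖d‖ * Real.exp (-(z/l)))) atTop (nhds 0) := by
        rw [show (0:ℝ) = -(‖d‖ * 0) by ring]
        apply Tendsto.neg
        apply Tendsto.const_mul
        exact Real.tendsto_exp_atBot.comp
          (tendsto_neg_atBot_iff.mpr (tendsto_id.atTop_div_const hl))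
      have := hs.add_atTop hb
      simpa [sub_eq_neg_add] using this
    have e1 := h3.eventually_ge_atTop 1
    have e2 := h2.eventually (gt_mem_nhds (by norm_num : (0:ℝ) < 1))
    obtain ⟨z, hz1, hz2⟩ := (e1.and e2).exists
    have := key z
    linarith
  -- extension of the low representation to the closed interval
  have hsubIoo : Set.Ioo (0:ℝ) h ⊆ Set.Ici (0:ℝ) := fun t ht => le_of_lt ht.1
  have hsubIoi : Set.Ioi h ⊆ Set.Ici (0:ℝ) := fun t ht => le_of_lt (lt_trans hh ht)
  have hFcont : Continuous (fun t : ℝ => a * Complex.exp ((1+Complex.I) * t)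
      + b * Complex.exp (-(1+Complex.I) * t) + ψg) := by fun_prop
  have hGcont : Continuous (fun t : ℝ => d * Complex.exp (-ν * t) + ψg) := by fun_prop
  have Hlow : ∀ z ∈ Set.Icc (0:ℝ) h, ψ z = a * Complex.exp ((1+Complex.I) * z)
      + b * Complex.exp (-(1+Complex.I) * z) + ψg := by
    intro z hz
    obtain ⟨hz0, hzh⟩ := hz
    rcases hz0.eq_or_lt with rfl | h1
    · exact eq_on_closure_pt (hcont.continuousWithinAt self_mem_Ici) hsubIoo
        (by rw [closure_Ioo hh.ne]; exact left_mem_Icc.mpr hh.le) Hlow0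
        hFcont.continuousAt
    · rcases hzh.eq_or_lt with rfl | h2
      · exact eq_on_closure_pt (hcont.continuousWithinAt (mem_Ici.mpr hh.le)) hsubIoo
          (by rw [closure_Ioo hh.ne]; exact right_mem_Icc.mpr hh.le) Hlow0
          hFcont.continuousAt
      · exact Hlow0 z ⟨h1, h2⟩
  have Hhigh0' : ∀ z ∈ Set.Ioi h, ψ z = d * Complex.exp (-ν * z) + ψg := by
    intro z hz
    rw [Hhigh0 z hz, hcc]; ring
  have Hhigh : ∀ z ∈ Set.Ici h, ψ z = d * Complex.exp (-ν * z) + ψg := by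
    intro z hz
    rcases (mem_Ici.mp hz).eq_or_lt with rfl | h2
    · exact eq_on_closure_pt (hcont.continuousWithinAt (mem_Ici.mpr hh.le)) hsubIoi
        (by rw [closure_Ioi]; exact self_mem_Ici) Hhigh0' hGcont.continuousAt
    · exact Hhigh0' z h2
  -- derivative identification
  have hU1 : UniqueDiffWithinAt ℝ (Set.Icc (0:ℝ) h) h :=
    uniqueDiffOn_Icc hh h (right_mem_Icc.mpr hh.le)
  have hU2 : UniqueDiffWithinAt ℝ (Set.Ici h) h := uniqueDiffOn_Ici h h self_mem_Ici
  have hFd : HasDerivAt (fun t : ℝ => a * Complex.exp ((1+Complex.I) * t)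
      + b * Complex.exp (-(1+Complex.I) * t) + ψg)
      (a * ((1+Complex.I) * Complex.exp ((1+Complex.I)*(h:ℂ)))
        + b * (-(1+Complex.I) * Complex.exp (-(1+Complex.I)*(h:ℂ)))) h :=
    (((cexp_real_hasDerivAt (1+Complex.I) h).const_mul a).add
      ((cexp_real_hasDerivAt (-(1+Complex.I)) h).const_mul b)).add_const ψg
  have hGd : HasDerivAt (fun t : ℝ => d * Complex.exp (-ν * t) + ψg)
      (d * (-ν * Complex.exp (-ν*(h:ℂ)))) h :=
    ((cexp_real_hasDerivAt (-ν) h).const_mul d).add_const ψg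
  have hψdm : HasDerivWithinAt ψ (a * ((1+Complex.I) * Complex.exp ((1+Complex.I)*(h:ℂ)))
      + b * (-(1+Complex.I) * Complex.exp (-(1+Complex.I)*(h:ℂ)))) (Set.Icc 0 h) h :=
    (hFd.hasDerivWithinAt).congr (fun t ht => Hlow t ht) (Hlow h (right_mem_Icc.mpr hh.le))
  have hψdp : HasDerivWithinAt ψ (d * (-ν * Complex.exp (-ν*(h:ℂ)))) (Set.Ici h) h :=
    (hGd.hasDerivWithinAt).congr (fun t ht => Hhigh t ht) (Hhigh h self_mem_Ici)
  have hdmv : dm = a * ((1+Complex.I) * Complex.exp ((1+Complex.I)*(h:ℂ)))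
      + b * (-(1+Complex.I) * Complex.exp (-(1+Complex.I)*(h:ℂ))) :=
    (hdm.derivWithin hU1).symm.trans (hψdm.derivWithin hU1)
  have hdpv : dp = d * (-ν * Complex.exp (-ν*(h:ℂ))) :=
    (hdp.derivWithin hU2).symm.trans (hψdp.derivWithin hU2)
  -- algebra
  set E : ℂ := Complex.exp ((1+Complex.I)*(h:ℂ)) with hEdef
  set G : ℂ := Complex.exp (ν*(h:ℂ)) with hGdef
  have hE0 : E ≠ 0 := Complex.exp_ne_zero _
  have hG0 : G ≠ 0 := Complex.exp_ne_zero _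
  have hEI : E * E⁻¹ = 1 := mul_inv_cancel₀ hE0
  have hGI : G * G⁻¹ = 1 := mul_inv_cancel₀ hG0
  have hEm : Complex.exp (-(1+Complex.I)*(h:ℂ)) = E⁻¹ := by
    rw [hEdef, ← Complex.exp_neg]; congr 1; ring
  have hGm : Complex.exp (-ν*(h:ℂ)) = G⁻¹ := by
    rw [hGdef, ← Complex.exp_neg]; congr 1; ring
  rw [hEm] at hdmv
  rw [hGm] at hdpv
  have e1 : a + b = -ψg := by
    have h' := (Hlow 0 ⟨le_rfl, hh.le⟩).symm.trans h0
    have h'' : a * Complex.exp ((1+Complex.I) * ((0:ℝ):ℂ))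
        + b * Complex.exp (-(1+Complex.I) * ((0:ℝ):ℂ)) + ψg = 0 := h'
    simp at h''
    linear_combination h''
  have e2 : a * E + b * E⁻¹ = d * G⁻¹ := by
    have h' := (Hlow h (right_mem_Icc.mpr hh.le)).symm.trans (Hhigh h self_mem_Ici)
    rw [hEm, hGm] at h'
    rw [← hEdef] at h'
    linear_combination h'
  have e3 : a * ((1+Complex.I) * E) + b * (-(1+Complex.I) * E⁻¹)
      = (l:ℂ)^2 * (d * (-ν * G⁻¹)) := by
    rw [← hdmv, ← hdpv]; exact hflux
  have f3 : a * E - b * E⁻¹ = -(l:ℂ) * (d * G⁻¹) := by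
    apply mul_left_cancel₀ hμ
    rw [hνdef] at e3
    have hlI : (l:ℂ) * (l:ℂ)⁻¹ = 1 := mul_inv_cancel₀ hl0
    linear_combination e3 - (1+Complex.I)*(l:ℂ)*d*G⁻¹*hlI
  have k1 : 2*a*E = (1-(l:ℂ))*(d*G⁻¹) := by linear_combination e2 + f3
  have k2 : 2*b*E⁻¹ = (1+(l:ℂ))*(d*G⁻¹) := by linear_combination e2 - f3
  have k3 : 2*b = (1+(l:ℂ))*(d*G⁻¹)*E := by linear_combination E*k2 - 2*b*hEI
  have k4 : 2*a*E^2 = (1-(l:ℂ))*(d*G⁻¹)*E := by linear_combination E*k1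
  have ha : a * ((1:ℂ) + E^2 - l + E^2*l) = ψg*((l:ℂ)-1) := by
    linear_combination ((1:ℂ)+l)/2*k4 - ((1:ℂ)-l)/2*k3 + ((1:ℂ)-l)*e1
  have hb : b * ((1:ℂ) + E^2 - l + E^2*l) = -(ψg*E^2*((l:ℂ)+1)) := by
    linear_combination (-1 : ℂ)*ha + (((1:ℂ)-l) + E^2*((1:ℂ)+l))*e1
  have h1l : ((1:ℂ)+(l:ℂ)) ≠ 0 := by
    rw [show ((1:ℂ)+(l:ℂ)) = ((1+l : ℝ):ℂ) by push_cast; ring]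
    exact_mod_cast (by linarith : (1+l:ℝ) ≠ 0)
  have hq : (d*G⁻¹)*E*((1:ℂ) + E^2 - l + E^2*l) = -(2*ψg*E^2) := by
    apply mul_left_cancel₀ h1l
    linear_combination (-((1:ℂ) + E^2 - l + E^2*l))*k3 + 2*hb
  have hd : d * ((1:ℂ) + E^2 - l + E^2*l) = -(2*ψg*E*G) := by
    apply mul_left_cancel₀ hE0
    linear_combination G*hq - d*E*((1:ℂ) + E^2 - l + E^2*l)*hGI
  have hden' : (1:ℂ) + E^2 - l + E^2*l ≠ 0 := by
    intro heq
    have h1 : E^2 * (1 + (l:ℂ)) = (l:ℂ) - 1 := by linear_combination heq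
    have h2 : ‖E^2‖ = Real.exp (2*h) := by
      rw [hEdef, ← Complex.exp_nat_mul, Complex.norm_exp]
      norm_num
    have h3 := congrArg Norm.norm h1
    rw [norm_mul, h2] at h3
    have h4 : ‖1 + (l:ℂ)‖ = 1 + l := by
      rw [show (1 + (l:ℂ)) = ((1 + l : ℝ) : ℂ) by push_cast; ring, Complex.norm_real, Real.norm_eq_abs]
      rw [abs_of_pos (by linarith)]
    have h5 : ‖(l:ℂ) - 1‖ = |l - 1| := by
      rw [show ((l:ℂ) - 1) = ((l - 1 : ℝ) : ℂ) by push_cast; ring, Complex.norm_real, Real.norm_eq_abs]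
    rw [h4, h5] at h3
    have h6 : |l - 1| < 1 + l := abs_sub_lt_iff.mpr ⟨by linarith, by linarith⟩
    have h7 : 1 < Real.exp (2*h) := by
      have := Real.add_one_le_exp (2*h)
      linarith
    nlinarith
  have hX : Complex.exp ((2+2*Complex.I)*(h:ℂ)) = E^2 := by
    rw [show ((2:ℂ)+2*Complex.I)*(h:ℂ) = (1+Complex.I)*(h:ℂ) + (1+Complex.I)*(h:ℂ) by ring,
      Complex.exp_add, hEdef]
    ring
  have hEG : Complex.exp ((1+Complex.I)*(h:ℂ) + (1+Complex.I)*(h:ℂ)/l) = E * G := by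
    rw [Complex.exp_add, hEdef, hGdef]
    congr 2
    rw [hνdef]
    ring
  constructor
  · intro z hz
    rw [Hlow z hz, hX]
    have haA : a = ψg * ((l:ℂ)-1) / ((1:ℂ) + E^2 - l + E^2*l) := by
      rw [eq_div_iff hden']; linear_combination ha
    have hbB : b = -(ψg * E^2 * ((l:ℂ)+1)) / ((1:ℂ) + E^2 - l + E^2*l) := by
      rw [eq_div_iff hden']; linear_combination hb
    rw [haA, hbB]
  · intro z hz
    rw [Hhigh z hz, hEG, hX]
    have hdD : d = -(2 * ψg * (E * G)) / ((1:ℂ) + E^2 - l + E^2*l) := by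
      rw [eq_div_iff hden']; linear_combination hd
    rw [hdD]
    have hexpz : Complex.exp (-ν*(z:ℂ)) = Complex.exp (-(1+Complex.I)*(z:ℂ)/l) := by
      congr 1; rw [hνdef]; ring
    rw [hexpz]
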